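/- Let L be a Poisson algebra over ℝ, I a Jordan ideal of L, and N = {g ∈ L : {g, f} ∈ I for all f ∈ I} its Lie normalizer. If N + I = L (the 'second class' case), then the quotient commutative ring L ⧸ I carries a Poisson bracket: there exists an antisymmetric ℝ-bilinear bracket on L ⧸ I satisfying the Jacobi identity and the Leibniz rule such that for all f, g ∈ N the bracket of the classes of f and g equals the class of {f, g}. -/

import Mathlib

/-- A Poisson bracket on a commutative associative ℝ-algebra `L`:
an ℝ-bilinear antisymmetric bracket satisfying the Jacobi identity and the
Leibniz rule with respect to the (Jordan) product of `L`. -/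
structure PoissonBracket (L : Type*) [CommRing L] [Algebra ℝ L] where
  bracket : L → L → L
  add_left : ∀ a b c : L, bracket (a + b) c = bracket a c + bracket b c
  smul_left : ∀ (r : ℝ) (a b : L), bracket (r • a) b = r • bracket a b
  antisymm : ∀ a b : L, bracket a b = - bracket b a
  jacobi : ∀ a b c : L,
    bracket a (bracket b c) + bracket b (bracket c a) + bracket c (bracket a b) = 0
  leibniz : ∀ a b c : L, bracket (a * b) c = a * bracket b c + bracket a c * b

/-- End of Section 3.2: if `N + I = L` (second class constraints) then the
quotient commutative ring `L ⧸ I` carries a Poisson bracket (the Dirac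
bracket), agreeing with the original bracket on classes of elements of `N`. -/
theorem stmt8 {L : Type*} [CommRing L] [Algebra ℝ L] (P : PoissonBracket L)
    (I : Ideal L)
    (hNI : ∀ x : L, ∃ g n : L,
      (∀ f ∈ I, P.bracket g f ∈ I) ∧ n ∈ I ∧ x = g + n) :
    ∃ br : (L ⧸ I) → (L ⧸ I) → (L ⧸ I),
      (∀ x y z : L ⧸ I, br (x + y) z = br x z + br y z) ∧
      (∀ (r : ℝ) (x y : L ⧸ I), br (r • x) y = r • br x y) ∧
      (∀ x y : L ⧸ I, br x y = - br y x) ∧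
      (∀ x y z : L ⧸ I, br x (br y z) + br y (br z x) + br z (br x y) = 0) ∧
      (∀ x y z : L ⧸ I, br (x * y) z = x * br y z + br x z * y) ∧
      (∀ f g : L, (∀ h ∈ I, P.bracket f h ∈ I) → (∀ h ∈ I, P.bracket g h ∈ I) →
        br (Ideal.Quotient.mk I f) (Ideal.Quotient.mk I g) =
          Ideal.Quotient.mk I (P.bracket f g)) := by
  classical
  set N : L → Prop := fun h => ∀ f ∈ I, P.bracket h f ∈ I with hNdef
  -- derived linearity properties of the bracket
  have zero_left : ∀ c : L, P.bracket 0 c = 0 := by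
    intro c
    have h := P.add_left 0 0 c
    rw [add_zero] at h
    exact (left_eq_add.mp h)
  have neg_left : ∀ a c : L, P.bracket (-a) c = - P.bracket a c := by
    intro a c
    have h := P.add_left a (-a) c
    rw [add_neg_cancel, zero_left] at h
    exact eq_neg_of_add_eq_zero_right h.symm
  have sub_left : ∀ a b c : L, P.bracket (a - b) c = P.bracket a c - P.bracket b c := by
    intro a b c
    rw [sub_eq_add_neg, P.add_left, neg_left, sub_eq_add_neg]
  have sub_right : ∀ a b c : L, P.bracket a (b - c) = P.bracket a b - P.bracket a c := by
    intro a b c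
    rw [P.antisymm a (b - c), sub_left, P.antisymm b a, P.antisymm c a]
    ring
  -- bracket of an element of I with an element of N is in I
  have memI_left : ∀ d f : L, d ∈ I → N f → P.bracket d f ∈ I := by
    intro d f hd hf
    rw [P.antisymm]
    exact I.neg_mem (hf d hd)
  -- well-definedness of the induced bracket on classes of normalizer elements
  have key : ∀ g g' f f' : L, N g' → N f → g - g' ∈ I → f - f' ∈ I →
      Ideal.Quotient.mk I (P.bracket g f) = Ideal.Quotient.mk I (P.bracket g' f') := by
    intro g g' f f' hg' hf hgg hff
    rw [Ideal.Quotient.eq]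
    have hrw : P.bracket g f - P.bracket g' f'
        = P.bracket (g - g') f + P.bracket g' (f - f') := by
      rw [sub_left, sub_right]; ring
    rw [hrw]
    exact I.add_mem (memI_left _ _ hgg hf) (hg' _ hff)
  -- closure properties of N
  have Nadd : ∀ a b : L, N a → N b → N (a + b) := by
    intro a b ha hb f hf
    rw [P.add_left]
    exact I.add_mem (ha f hf) (hb f hf)
  have Nsmul : ∀ (r : ℝ) (a : L), N a → N (r • a) := by
    intro r a ha f hf
    rw [P.smul_left, ← algebraMap_smul L r (P.bracket a f)]
    exact I.smul_mem _ (ha f hf)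
  have Nmul : ∀ a b : L, N a → N b → N (a * b) := by
    intro a b ha hb f hf
    rw [P.leibniz]
    exact I.add_mem (I.mul_mem_left a (hb f hf)) (I.mul_mem_right b (ha f hf))
  have Nbr : ∀ a b : L, N a → N b → N (P.bracket a b) := by
    intro a b ha hb f hf
    have hrw : P.bracket (P.bracket a b) f
        = P.bracket a (P.bracket b f) + P.bracket b (P.bracket f a) := by
      linear_combination P.antisymm (P.bracket a b) f - P.jacobi a b f
    rw [hrw]
    have h1 : P.bracket a (P.bracket b f) ∈ I := ha _ (hb f hf)
    have h2 : P.bracket b (P.bracket f a) ∈ I := by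
      apply hb
      rw [P.antisymm f a]
      exact I.neg_mem (ha f hf)
    exact I.add_mem h1 h2
  -- a section of the quotient landing in N
  choose G Nn hG hNn hx using hNI
  choose rep hrep using Ideal.Quotient.mk_surjective (I := I)
  set s : L ⧸ I → L := fun x => G (rep x) with hsdef
  have hsN : ∀ x : L ⧸ I, N (s x) := fun x => hG (rep x)
  have hs : ∀ x : L ⧸ I, Ideal.Quotient.mk I (s x) = x := by
    intro x
    have h1 : Ideal.Quotient.mk I (G (rep x)) = Ideal.Quotient.mk I (rep x) := by
      rw [Ideal.Quotient.eq]
      have h2 : G (rep x) - rep x = -Nn (rep x) := by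
        linear_combination -hx (rep x)
      rw [h2]
      exact I.neg_mem (hNn (rep x))
    exact h1.trans (hrep x)
  set br : (L ⧸ I) → (L ⧸ I) → (L ⧸ I) :=
    fun x y => Ideal.Quotient.mk I (P.bracket (s x) (s y)) with hbrdef
  -- the bracket only depends on representatives chosen in N
  have brEq : ∀ (x y : L ⧸ I) (g f : L), N g → N f →
      Ideal.Quotient.mk I g = x → Ideal.Quotient.mk I f = y →
      br x y = Ideal.Quotient.mk I (P.bracket g f) := by
    intro x y g f hg hf hgx hfy
    apply key
    · exact hg
    · exact hsN y
    · rw [← Ideal.Quotient.eq, hs x, hgx]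
    · rw [← Ideal.Quotient.eq, hs y, hfy]
  have mk_smul : ∀ (r : ℝ) (a : L),
      Ideal.Quotient.mk I (r • a) = r • Ideal.Quotient.mk I a := by
    intro r a
    rw [← Ideal.Quotient.mkₐ_eq_mk ℝ I]
    exact map_smul (Ideal.Quotient.mkₐ ℝ I) r a
  refine ⟨br, ?_, ?_, ?_, ?_, ?_, ?_⟩
  · intro x y z
    rw [brEq (x + y) z (s x + s y) (s z) (Nadd _ _ (hsN x) (hsN y)) (hsN z)
      (by rw [map_add, hs, hs]) (hs z)]
    rw [P.add_left, map_add]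
  · intro r x y
    rw [brEq (r • x) y (r • s x) (s y) (Nsmul r _ (hsN x)) (hsN y)
      (by rw [mk_smul, hs]) (hs y)]
    rw [P.smul_left, mk_smul]
  · intro x y
    show Ideal.Quotient.mk I _ = - Ideal.Quotient.mk I _
    rw [P.antisymm (s x) (s y), map_neg]
  · intro x y z
    rw [brEq x (br y z) (s x) (P.bracket (s y) (s z)) (hsN x)
        (Nbr _ _ (hsN y) (hsN z)) (hs x) rfl,
      brEq y (br z x) (s y) (P.bracket (s z) (s x)) (hsN y)
        (Nbr _ _ (hsN z) (hsN x)) (hs y) rfl,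
      brEq z (br x y) (s z) (P.bracket (s x) (s y)) (hsN z)
        (Nbr _ _ (hsN x) (hsN y)) (hs z) rfl,
      ← map_add, ← map_add, P.jacobi, map_zero]
  · intro x y z
    rw [brEq (x * y) z (s x * s y) (s z) (Nmul _ _ (hsN x) (hsN y)) (hsN z)
      (by rw [map_mul, hs, hs]) (hs z)]
    rw [P.leibniz, map_add, map_mul, map_mul, hs x, hs y]
  · intro f g hf hg
    exact brEq _ _ f g hf hg rfl rfl
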